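/- Let a : Fin n → ℝ be positive and 1 ≤ k ≤ n. Then ∑ over all k-element subsets S of {1,...,n} of (∏_{i∈S} aᵢ)/(∑_{i∈S} aᵢ) ≤ (n/k) · (∑ over all k-element subsets S of ∏_{i∈S} aᵢ) / (∑_{i=1}^n aᵢ). -/

import Mathlib

open Finset

/-- Double counting: pairs (S, j∉S) with |S|=k correspond to pairs (T, j∈T) with |T|=k+1. -/
lemma swap_pairs {ι : Type*} [DecidableEq ι] (u : Finset ι) (k : ℕ)
    (f : Finset ι → ι → ℝ) :
    ∑ S ∈ u.powersetCard k, ∑ j ∈ u \ S, f (insert j S) j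
      = ∑ T ∈ u.powersetCard (k+1), ∑ j ∈ T, f T j := by
  rw [Finset.sum_sigma', Finset.sum_sigma']
  refine Finset.sum_bij' (fun p _ => ⟨insert p.2 p.1, p.2⟩)
    (fun p _ => ⟨p.1.erase p.2, p.2⟩) ?_ ?_ ?_ ?_ ?_
  · rintro ⟨S, j⟩ hp
    simp only [Finset.mem_sigma, Finset.mem_powersetCard, Finset.mem_sdiff,
      ] at hp ⊢
    obtain ⟨⟨hSu, hScard⟩, hju, hjS⟩ := hp
    refine ⟨⟨Finset.insert_subset hju hSu, ?_⟩, Finset.mem_insert_self _ _⟩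
    rw [Finset.card_insert_of_notMem hjS, hScard]
  · rintro ⟨T, j⟩ hp
    simp only [Finset.mem_sigma, Finset.mem_powersetCard, Finset.mem_sdiff,
      Finset.mem_erase] at hp ⊢
    obtain ⟨⟨hTu, hTcard⟩, hjT⟩ := hp
    refine ⟨⟨(Finset.erase_subset _ _).trans hTu, ?_⟩, hTu hjT, fun h => h.1 rfl⟩
    rw [Finset.card_erase_of_mem hjT, hTcard]; omega
  · rintro ⟨S, j⟩ hp
    simp only [Finset.mem_sigma, Finset.mem_powersetCard, Finset.mem_sdiff] at hp
    simp [Finset.erase_insert hp.2.2]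
  · rintro ⟨T, j⟩ hp
    simp only [Finset.mem_sigma, Finset.mem_powersetCard] at hp
    simp [Finset.insert_erase hp.2]
  · rintro ⟨S, j⟩ hp
    rfl

/-- Cauchy-Schwarz / AM-HM : card² ≤ (∑ a)(∑ 1/a) for positive a. -/
lemma card_sq_le_sum_mul_sum {ι : Type*} (E : Finset ι) (a : ι → ℝ)
    (ha : ∀ i ∈ E, 0 < a i) :
    (E.card : ℝ) ^ 2 ≤ (∑ i ∈ E, a i) * (∑ i ∈ E, 1 / a i) := by
  have h := Finset.sum_mul_sq_le_sq_mul_sq E (fun i => Real.sqrt (a i))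
    (fun i => 1 / Real.sqrt (a i))
  have h1 : ∑ i ∈ E, Real.sqrt (a i) * (1 / Real.sqrt (a i)) = (E.card : ℝ) := by
    rw [Finset.sum_congr rfl (fun i hi => ?_), Finset.sum_const, nsmul_eq_mul, mul_one]
    field_simp [Real.sqrt_ne_zero'.2 (ha i hi)]
  have h2 : ∀ i ∈ E, Real.sqrt (a i) ^ 2 = a i := fun i hi =>
    Real.sq_sqrt (ha i hi).le
  have h3 : ∀ i ∈ E, (1 / Real.sqrt (a i)) ^ 2 = 1 / a i := by
    intro i hi
    rw [div_pow, one_pow, Real.sq_sqrt (ha i hi).le]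
  calc (E.card : ℝ) ^ 2 = (∑ i ∈ E, Real.sqrt (a i) * (1 / Real.sqrt (a i))) ^ 2 := by
        rw [h1]
    _ ≤ (∑ i ∈ E, Real.sqrt (a i) ^ 2) * ∑ i ∈ E, (1 / Real.sqrt (a i)) ^ 2 := h
    _ = (∑ i ∈ E, a i) * (∑ i ∈ E, 1 / a i) := by
        rw [Finset.sum_congr rfl h2, Finset.sum_congr rfl h3]

theorem stmt5 (n k : ℕ) (hk : 1 ≤ k) (hkn : k ≤ n) (a : Fin n → ℝ) (ha : ∀ i, 0 < a i) :
    ∑ S ∈ Finset.univ.powersetCard k, (∏ i ∈ S, a i) / (∑ i ∈ S, a i) ≤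
      ((n:ℝ)/(k:ℝ)) * (∑ S ∈ Finset.univ.powersetCard k, ∏ i ∈ S, a i) / (∑ i, a i) := by
  have hn : 1 ≤ n := hk.trans hkn
  have hkpos : (0:ℝ) < k := by exact_mod_cast hk
  have hT : (0:ℝ) < ∑ i, a i := by
    apply Finset.sum_pos (fun i _ => ha i)
    exact Finset.univ_nonempty_iff.2 (Fin.pos_iff_nonempty.1 hn)
  have hScard : ∀ S ∈ (Finset.univ : Finset (Fin n)).powersetCard k, S.card = k :=
    fun S hS => (Finset.mem_powersetCard.1 hS).2
  have hSpos : ∀ S ∈ (Finset.univ : Finset (Fin n)).powersetCard k,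
      (0:ℝ) < ∑ i ∈ S, a i := by
    intro S hS
    apply Finset.sum_pos (fun i _ => ha i)
    rw [← Finset.card_pos, hScard S hS]; exact hk
  have hPpos : ∀ S : Finset (Fin n), (0:ℝ) < ∏ i ∈ S, a i :=
    fun S => Finset.prod_pos (fun i _ => ha i)
  set B := ∑ S ∈ Finset.univ.powersetCard k, ∏ i ∈ S, a i with hB
  rw [div_mul_eq_mul_div, div_div, le_div_iff₀ (by positivity)]
  -- goal : (∑ S, P_S/s_S) * (k * ∑ a) ≤ n * B  (up to ordering)
  -- expand (P_S/s_S) * (∑ a) = P_S + ∑_{j∉S} P_S * a j / s_S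
  have expand : ∀ S ∈ (Finset.univ : Finset (Fin n)).powersetCard k,
      (∏ i ∈ S, a i) / (∑ i ∈ S, a i) * (∑ i, a i)
        = (∏ i ∈ S, a i) + ∑ j ∈ Finset.univ \ S, (∏ i ∈ S, a i) * a j / (∑ i ∈ S, a i) := by
    intro S hS
    have hs := (hSpos S hS).ne'
    have hsplit : (∑ i, a i) = (∑ i ∈ S, a i) + ∑ j ∈ Finset.univ \ S, a j := by
      rw [add_comm, Finset.sum_sdiff (Finset.subset_univ S)]
    have hr : ∑ j ∈ Finset.univ \ S, (∏ i ∈ S, a i) * a j / (∑ i ∈ S, a i)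
        = (∏ i ∈ S, a i) * (∑ j ∈ Finset.univ \ S, a j) / (∑ i ∈ S, a i) := by
      rw [← Finset.sum_div, ← Finset.mul_sum]
    rw [hr, hsplit]
    field_simp
  -- the two double sums, re-indexed over (k+1)-sets
  have hD : ∑ S ∈ (Finset.univ : Finset (Fin n)).powersetCard k,
        ∑ j ∈ Finset.univ \ S, (∏ i ∈ S, a i) * a j / (∑ i ∈ S, a i)
      = ∑ T ∈ (Finset.univ : Finset (Fin n)).powersetCard (k+1),
        ∑ j ∈ T, (∏ i ∈ T.erase j, a i) * a j / (∑ i ∈ T.erase j, a i) := by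
    rw [← swap_pairs]
    refine Finset.sum_congr rfl fun S hS => Finset.sum_congr rfl fun j hj => ?_
    rw [Finset.erase_insert (Finset.mem_sdiff.1 hj).2]
  have hE : ((n:ℝ) - k) * B
      = ∑ T ∈ (Finset.univ : Finset (Fin n)).powersetCard (k+1),
        ∑ j ∈ T, (∏ i ∈ T.erase j, a i) := by
    rw [← swap_pairs (Finset.univ : Finset (Fin n)) k (fun T j => ∏ i ∈ T.erase j, a i)]
    rw [hB, Finset.mul_sum]
    refine Finset.sum_congr rfl fun S hS => ?_
    have : ∀ j ∈ Finset.univ \ S, (∏ i ∈ (insert j S).erase j, a i) = ∏ i ∈ S, a i := by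
      intro j hj
      rw [Finset.erase_insert (Finset.mem_sdiff.1 hj).2]
    rw [Finset.sum_congr rfl this, Finset.sum_const, nsmul_eq_mul,
      Finset.card_sdiff_of_subset (Finset.subset_univ S), Finset.card_univ, Fintype.card_fin,
      hScard S hS, Nat.cast_sub hkn]
  -- per-(k+1)-set inequality
  have perT : ∀ T ∈ (Finset.univ : Finset (Fin n)).powersetCard (k+1),
      (k:ℝ) * ∑ j ∈ T, (∏ i ∈ T.erase j, a i) * a j / (∑ i ∈ T.erase j, a i)
        ≤ ∑ j ∈ T, (∏ i ∈ T.erase j, a i) := by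
    intro T hT'
    have hTc : T.card = k + 1 := (Finset.mem_powersetCard.1 hT').2
    have herase_card : ∀ j ∈ T, (T.erase j).card = k := fun j hj => by
      rw [Finset.card_erase_of_mem hj, hTc]; omega
    have hspos : ∀ j ∈ T, (0:ℝ) < ∑ i ∈ T.erase j, a i := fun j hj => by
      apply Finset.sum_pos (fun i _ => ha i)
      rw [← Finset.card_pos, herase_card j hj]; exact hk
    have hstep : ∀ j ∈ T, (∏ i ∈ T.erase j, a i) * a j / (∑ i ∈ T.erase j, a i)
        = (∏ i ∈ T, a i) * (1 / (∑ i ∈ T.erase j, a i)) := fun j hj => by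
      rw [Finset.prod_erase_mul T a hj]; ring
    have hstep2 : ∀ j ∈ T, (∏ i ∈ T.erase j, a i) = (∏ i ∈ T, a i) * (1 / a j) := by
      intro j hj
      rw [← Finset.prod_erase_mul T a hj]
      field_simp [(ha j).ne']
    rw [Finset.sum_congr rfl hstep, Finset.sum_congr rfl hstep2, ← Finset.mul_sum,
      ← Finset.mul_sum]
    have main : (k:ℝ) * ∑ j ∈ T, 1 / (∑ i ∈ T.erase j, a i) ≤ ∑ j ∈ T, 1 / a j := by
      have h1 : ∀ j ∈ T, 1 / (∑ i ∈ T.erase j, a i)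
          ≤ 1 / (k:ℝ)^2 * ∑ i ∈ T.erase j, 1 / a i := by
        intro j hj
        have hcs := card_sq_le_sum_mul_sum (T.erase j) a (fun i _ => ha i)
        rw [herase_card j hj] at hcs
        have hk2 : (0:ℝ) < (k:ℝ)^2 := by positivity
        rw [one_div_mul_eq_div, div_le_div_iff₀ (hspos j hj) hk2]
        nlinarith [hcs]
      have h2 : ∑ j ∈ T, (1 / (k:ℝ)^2 * ∑ i ∈ T.erase j, 1 / a i)
          = 1 / (k:ℝ)^2 * ((k:ℝ) * ∑ j ∈ T, 1 / a j) := by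
        rw [← Finset.mul_sum]
        congr 1
        have : ∀ j ∈ T, (∑ i ∈ T.erase j, 1 / a i) = (∑ i ∈ T, 1 / a i) - 1 / a j :=
          fun j hj => Finset.sum_erase_eq_sub hj
        rw [Finset.sum_congr rfl this, Finset.sum_sub_distrib, Finset.sum_const,
          nsmul_eq_mul, hTc]
        push_cast
        ring
      have h3 := Finset.sum_le_sum h1
      rw [h2] at h3
      calc (k:ℝ) * ∑ j ∈ T, 1 / (∑ i ∈ T.erase j, a i)
          ≤ (k:ℝ) * (1 / (k:ℝ)^2 * ((k:ℝ) * ∑ j ∈ T, 1 / a j)) := by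
            exact mul_le_mul_of_nonneg_left h3 hkpos.le
        _ = ∑ j ∈ T, 1 / a j := by field_simp
    calc (k:ℝ) * ((∏ i ∈ T, a i) * ∑ j ∈ T, 1 / (∑ i ∈ T.erase j, a i))
        = (∏ i ∈ T, a i) * ((k:ℝ) * ∑ j ∈ T, 1 / (∑ i ∈ T.erase j, a i)) := by ring
      _ ≤ (∏ i ∈ T, a i) * ∑ j ∈ T, 1 / a j :=
          mul_le_mul_of_nonneg_left main (hPpos T).le
  -- assemble
  have key : (k:ℝ) * (∑ T ∈ (Finset.univ : Finset (Fin n)).powersetCard (k+1),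
        ∑ j ∈ T, (∏ i ∈ T.erase j, a i) * a j / (∑ i ∈ T.erase j, a i))
      ≤ ((n:ℝ) - k) * B := by
    rw [hE, Finset.mul_sum]
    exact Finset.sum_le_sum perT
  have lhs_eq : (∑ S ∈ (Finset.univ : Finset (Fin n)).powersetCard k,
        (∏ i ∈ S, a i) / (∑ i ∈ S, a i)) * (∑ i, a i)
      = B + ∑ T ∈ (Finset.univ : Finset (Fin n)).powersetCard (k+1),
        ∑ j ∈ T, (∏ i ∈ T.erase j, a i) * a j / (∑ i ∈ T.erase j, a i) := by
    rw [Finset.sum_mul, Finset.sum_congr rfl expand, Finset.sum_add_distrib, hD, hB]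
  calc (∑ S ∈ (Finset.univ : Finset (Fin n)).powersetCard k,
        (∏ i ∈ S, a i) / (∑ i ∈ S, a i)) * ((k:ℝ) * ∑ i, a i)
      = (k:ℝ) * ((∑ S ∈ (Finset.univ : Finset (Fin n)).powersetCard k,
          (∏ i ∈ S, a i) / (∑ i ∈ S, a i)) * (∑ i, a i)) := by ring
    _ = (k:ℝ) * B + (k:ℝ) * (∑ T ∈ (Finset.univ : Finset (Fin n)).powersetCard (k+1),
          ∑ j ∈ T, (∏ i ∈ T.erase j, a i) * a j / (∑ i ∈ T.erase j, a i)) := by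
        rw [lhs_eq]; ring
    _ ≤ (k:ℝ) * B + ((n:ℝ) - k) * B := by linarith [key]
    _ = (n:ℝ) * B := by ring
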